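/- For p = (x,y,z) in the simplex not a vertex, the matrix M_p restricted to the plane L = {u+v+w = 0} has two real eigenvalues λ₀(p), λ₋₁(p), both lying in the interval [-1, 0]; moreover λ₋₁(p) = -1 and λ₀(p) = 0 hold if and only if p lies on the boundary of the simplex (one coordinate zero) but is not a vertex. -/
import Mathlib
open Matrix Polynomial

noncomputable def Mp (p : Fin 3 → ℝ) : Matrix (Fin 3) (Fin 3) ℝ :=
  !![0, p 2 / (p 0 + p 2), p 1 / (p 0 + p 1);
     p 2 / (p 1 + p 2), 0, p 0 / (p 0 + p 1);
     p 1 / (p 1 + p 2), p 0 / (p 0 + p 2), 0]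

lemma charpoly_aux (a b c d e f : ℝ) :
    (!![0,a,b;c,0,d;e,f,0] : Matrix (Fin 3) (Fin 3) ℝ).charpoly
      = X^3 - C (a*c + b*e + d*f) * X - C (a*d*e + b*c*f) := by
  rw [Matrix.charpoly, Matrix.det_fin_three]
  simp [charmatrix_apply_eq, charmatrix_apply_ne]
  ring

/-- For `p` in the simplex, not a vertex, the two eigenvalues of `M_p` besides `1`
(i.e. the eigenvalues of `M_p` restricted to the invariant plane `L`) are real and
lie in `[-1, 0]`; moreover `λ₋₁ = -1` and `λ₀ = 0` hold iff `p` lies on the boundary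
(one coordinate zero, and not a vertex by the hypotheses). -/
theorem stmt4 (x y z : ℝ) (hx : 0 ≤ x) (hy : 0 ≤ y) (hz : 0 ≤ z)
    (hxy : 0 < x + y) (hxz : 0 < x + z) (hyz : 0 < y + z)
    (hsum : x + y + z = 1) :
    ∃ l0 lm : ℝ, lm ≤ l0 ∧
      l0 ∈ Set.Icc (-1 : ℝ) 0 ∧ lm ∈ Set.Icc (-1 : ℝ) 0 ∧
      (Mp ![x, y, z]).charpoly = (X - C 1) * (X - C l0) * (X - C lm) ∧
      ((lm = -1 ∧ l0 = 0) ↔ (x = 0 ∨ y = 0 ∨ z = 0)) := by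
  have hD : 0 < (x + y) * ((x + z) * (y + z)) := by positivity
  set q : ℝ := 2 * x * y * z / ((x + y) * ((x + z) * (y + z))) with hq
  have hq0 : 0 ≤ q := by positivity
  have hq4 : q ≤ 1 / 4 := by
    rw [hq, div_le_iff₀ hD]
    nlinarith [sq_nonneg (x - y), sq_nonneg (x - z), sq_nonneg (y - z),
      mul_nonneg (mul_nonneg hx hy) hz, mul_nonneg hx hy, mul_nonneg hx hz,
      mul_nonneg hy hz]
  set d : ℝ := Real.sqrt (1 - 4 * q) with hdd
  have hd0 : 0 ≤ d := Real.sqrt_nonneg _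
  have hd2 : d ^ 2 = 1 - 4 * q := Real.sq_sqrt (by linarith)
  have hd1 : d ≤ 1 := by nlinarith
  refine ⟨(-1 + d) / 2, (-1 - d) / 2, by linarith, ⟨by linarith, by linarith⟩,
    ⟨by linarith, by linarith⟩, ?_, ?_⟩
  · -- charpoly
    have hM : Mp ![x, y, z] = !![0, z/(x+z), y/(x+y); z/(y+z), 0, x/(x+y);
        y/(y+z), x/(x+z), 0] := by
      simp [Mp]
    rw [hM, charpoly_aux]
    have h1 : z/(x+z) * (z/(y+z)) + y/(x+y) * (y/(y+z)) + x/(x+y) * (x/(x+z))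
        = 1 - q := by
      rw [hq]
      field_simp
      ring
    have h2 : z/(x+z) * (x/(x+y)) * (y/(y+z)) + y/(x+y) * (z/(y+z)) * (x/(x+z))
        = q := by
      rw [hq]
      field_simp
      ring
    have hs : ((-1 + d) / 2 : ℝ) + (-1 - d) / 2 = -1 := by ring
    have hp : ((-1 + d) / 2 : ℝ) * ((-1 - d) / 2) = q := by nlinarith [hd2]
    have hC1 := congrArg (C : ℝ → ℝ[X]) h1
    have hC2 := congrArg (C : ℝ → ℝ[X]) h2
    have hCs := congrArg (C : ℝ → ℝ[X]) hs
    have hCp := congrArg (C : ℝ → ℝ[X]) hp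
    simp only [map_add, _root_.map_mul, map_sub, _root_.map_one, map_neg, map_div₀, map_ofNat] at hC1 hC2 hCs hCp
    simp only [map_add, _root_.map_mul, Polynomial.C_1] 
    linear_combination (-X : ℝ[X]) * hC1 - hC2 + (X^2 - X) * hCs + (1 - X) * hCp
  · -- iff
    constructor
    · rintro ⟨h1, -⟩
      have hd : d = 1 := by linarith
      have hq0' : q = 0 := by nlinarith [hd2]
      have hxyz : x * y * z = 0 := by
        have := hq0'
        rw [hq, _root_.div_eq_zero_iff] at this
        rcases this with h | h
        · linarith
        · linarith
      rcases mul_eq_zero.mp hxyz with h | h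
      · rcases mul_eq_zero.mp h with h | h
        · exact Or.inl h
        · exact Or.inr (Or.inl h)
      · exact Or.inr (Or.inr h)
    · intro h
      have hq0' : q = 0 := by
        rcases h with h | h | h <;> rw [hq, h] <;> simp
      have hd : d = 1 := by rw [hdd, hq0']; simp
      constructor <;> rw [hd] <;> ring
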